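/- Let x̂ = x^{⊕2} ∈ sl(2n+1,ℂ) (viewed as a real Lie algebra via sl(2n+1,ℝ) ⊕ i·sl(2n+1,ℝ)) where x ∈ sl(2n+1,ℝ) is the block matrix with E₁₁ in the (2,1) block and zeros elsewhere, and let A ∈ End(sl(2n+1,ℝ)) be the map [[0, -Id],[Id, 0]] with respect to the decomposition sl(2n+1,ℝ) = s₊ ⊕ s₋. Then tr(A ∘ ad x) = 2n + 2; in particular the Koszul 1-form ψ₁(x̂) = 2·tr(A ∘ ad x) is nonzero. -/

import Mathlib

open Matrix

attribute [local instance 100] LieRing.ofAssociativeRing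

namespace Stmt19

/-- `(A, v, w) ↦ [[A, w], [vᵗ, -tr A]]`. -/
def Phi {ι : Type} [Fintype ι] (A : Matrix ι ι ℝ) (v w : ι → ℝ) :
    Matrix (ι ⊕ Unit) (ι ⊕ Unit) ℝ :=
  Matrix.fromBlocks A (Matrix.of fun i (_ : Unit) => w i)
    (Matrix.of fun (_ : Unit) j => v j) (Matrix.of fun _ _ => -A.trace)

/-- `J₀ = [[0,-Iₙ],[Iₙ,0]]`. -/
def J0 (n : ℕ) : Matrix (Fin n ⊕ Fin n) (Fin n ⊕ Fin n) ℝ :=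
  Matrix.fromBlocks 0 (-1) 1 0

lemma stdBasis_repr_eq {I : Type} [Fintype I] [DecidableEq I] (M : Matrix I I ℝ) (p : I × I) :
    (Matrix.stdBasis ℝ I I).repr M p = M p.1 p.2 := by
  have h : M = ∑ q : I × I, M q.1 q.2 • Matrix.stdBasis ℝ I I q := by
    conv_lhs => rw [Matrix.matrix_eq_sum_single M]
    rw [Fintype.sum_prod_type]
    simp_rw [Matrix.stdBasis_eq_single, smul_single, smul_eq_mul, mul_one]
  conv_lhs => rw [h]
  rw [Module.Basis.repr_sum_self]

lemma trace_eq_sum_entries {I : Type} [Fintype I] [DecidableEq I]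
    (f : Matrix I I ℝ →ₗ[ℝ] Matrix I I ℝ) :
    LinearMap.trace ℝ _ f = ∑ p : I × I, f (Matrix.single p.1 p.2 1) p.1 p.2 := by
  rw [LinearMap.trace_eq_matrix_trace ℝ (Matrix.stdBasis ℝ I I), Matrix.trace]
  refine Finset.sum_congr rfl fun p _ => ?_
  obtain ⟨i, j⟩ := p
  rw [Matrix.diag_apply, LinearMap.toMatrix_apply, Matrix.stdBasis_eq_single ℝ i j,
    stdBasis_repr_eq]

section PhiLemmas

variable {ι : Type} [Fintype ι] [DecidableEq ι]

omit [DecidableEq ι] in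
lemma Phi_eq (A : Matrix ι ι ℝ) (h : A.trace = 0) :
    Phi A 0 0 = Matrix.fromBlocks A 0 0 0 := by
  ext p q
  rcases p with p | ⟨⟩ <;> rcases q with q | ⟨⟩ <;> simp [Phi, h]

lemma sbm_ll (i j : ι) (h : i ≠ j) :
    Matrix.single (Sum.inl i : ι ⊕ Unit) (Sum.inl j) (1:ℝ)
      = Phi (Matrix.single i j 1) 0 0 := by
  rw [Phi_eq _ (Matrix.trace_single_eq_of_ne i j (1:ℝ) h)]
  ext p q
  rcases p with p | ⟨⟩ <;> rcases q with q | ⟨⟩ <;> simp [Matrix.single]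

lemma sbm_lr (i : ι) :
    Matrix.single (Sum.inl i : ι ⊕ Unit) (Sum.inr ()) (1:ℝ)
      = Phi 0 0 (fun k => if k = i then 1 else 0) := by
  ext p q
  rcases p with p | ⟨⟩ <;> rcases q with q | ⟨⟩ <;>
    simp [Phi, Matrix.single, eq_comm]

lemma sbm_rl (j : ι) :
    Matrix.single (Sum.inr () : ι ⊕ Unit) (Sum.inl j) (1:ℝ)
      = Phi 0 (fun k => if k = j then 1 else 0) 0 := by
  ext p q
  rcases p with p | ⟨⟩ <;> rcases q with q | ⟨⟩ <;>
    simp [Phi, Matrix.single, eq_comm]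

lemma sbm_diag (i j : ι) :
    Matrix.single (Sum.inl i : ι ⊕ Unit) (Sum.inl i) (1:ℝ)
      - Matrix.single (Sum.inl j) (Sum.inl j) 1
      = Phi (Matrix.single i i 1 - Matrix.single j j 1) 0 0 := by
  rw [Phi_eq]
  · ext p q
    rcases p with p | ⟨⟩ <;> rcases q with q | ⟨⟩ <;> simp [Matrix.single]
  · simp [Matrix.trace_sub, Matrix.trace_single_eq_same]

end PhiLemmas

/-- Let `x ∈ sl(2n+1,ℝ)` be the block matrix with `E₁₁` in the `(2,1)`
block and zeros elsewhere, and let `A` be the endomorphism of `sl(2n+1,ℝ)` given by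
`[[0,-Id],[Id,0]]` with respect to the decomposition `s₊ ⊕ s₋` (i.e. the complex
structure `J`).  Then `tr(A ∘ ad x) = 2n + 2`; in particular the Koszul `1`-form
satisfies `ψ₁(x̂) = 2 tr(A ∘ ad x) ≠ 0`. -/
theorem stmt19 (n : ℕ) (hn : 0 < n)
    (J : Matrix ((Fin n ⊕ Fin n) ⊕ Unit) ((Fin n ⊕ Fin n) ⊕ Unit) ℝ →ₗ[ℝ]
      Matrix ((Fin n ⊕ Fin n) ⊕ Unit) ((Fin n ⊕ Fin n) ⊕ Unit) ℝ)
    (hJ : ∀ (A : Matrix (Fin n ⊕ Fin n) (Fin n ⊕ Fin n) ℝ) (v w : Fin n ⊕ Fin n → ℝ),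
      J (Phi A v w) = Phi (A * J0 n) (-(J0 n *ᵥ v)) (-(J0 n *ᵥ w))) :
    LinearMap.trace ℝ _
        (J ∘ₗ (LieAlgebra.ad ℝ
          (Matrix ((Fin n ⊕ Fin n) ⊕ Unit) ((Fin n ⊕ Fin n) ⊕ Unit) ℝ)
          (Phi (Matrix.fromBlocks 0 0
            (Matrix.single ⟨0, hn⟩ ⟨0, hn⟩ (1 : ℝ)) 0) 0 0))) =
      2 * (n : ℝ) + 2 ∧
    (2 : ℝ) * (2 * (n : ℝ) + 2) ≠ 0 := by
  constructor
  · set z : Fin n := ⟨0, hn⟩ with hz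
    set aa : (Fin n ⊕ Fin n) ⊕ Unit := Sum.inl (Sum.inr z) with haa
    set bb : (Fin n ⊕ Fin n) ⊕ Unit := Sum.inl (Sum.inl z) with hbb
    set cc : (Fin n ⊕ Fin n) ⊕ Unit := Sum.inr () with hcc
    have hx : Phi (Matrix.fromBlocks 0 0
        (Matrix.single z z (1 : ℝ)) 0) 0 0 = Matrix.single aa bb 1 := by
      rw [Phi_eq _ (by simp [Matrix.trace, Fintype.sum_sum_type])]
      ext p q
      rcases p with (p | p) | ⟨⟩ <;> rcases q with (q | q) | ⟨⟩ <;>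
        simp [Matrix.single, haa, hbb]
    rw [hx]
    rw [trace_eq_sum_entries]
    have key : ∀ p q : (Fin n ⊕ Fin n) ⊕ Unit,
        (J ∘ₗ (LieAlgebra.ad ℝ _ (Matrix.single aa bb 1)))
            (Matrix.single p q 1) p q
          = (if q = aa then (1:ℝ) else 0) + (if p = bb ∧ q = cc then 1 else 0) := by
      intro p q
      rw [LinearMap.comp_apply, LieAlgebra.ad_apply, Ring.lie_def]
      by_cases hp : p = bb
      · subst hp
        by_cases hq : q = aa
        · subst hq
          rw [Matrix.single_mul_single_same, Matrix.single_mul_single_same, one_mul,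
            haa, hbb, sbm_diag, hJ]
          simp [Phi, J0, haa, hbb, hcc, Matrix.sub_mul, Matrix.mul_apply,
            Matrix.single, Finset.sum_ite_eq, Finset.sum_ite_eq']
        · rw [Matrix.single_mul_single_same, one_mul,
            Matrix.single_mul_single_of_ne (h := hq), sub_zero]
          rcases q with (j | j) | ⟨⟩
          · rw [haa, sbm_ll (Sum.inr z) (Sum.inl j) (by simp), hJ]
            simp [Phi, J0, hbb, Matrix.mul_apply, Matrix.single, hq,
              Finset.sum_ite_eq, Finset.sum_ite_eq']
          · have hjz : j ≠ z := fun h => hq (by rw [haa, h])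
            rw [haa, sbm_ll (Sum.inr z) (Sum.inr j)
              (fun h => hjz (Sum.inr_injective h).symm), hJ]
            simp [Phi, J0, hbb, Matrix.mul_apply, Matrix.single, hq, hjz,
              Finset.sum_ite_eq, Finset.sum_ite_eq']
          · rw [haa, sbm_lr (Sum.inr z), hJ]
            simp [Phi, J0, hbb, hcc, hq, Matrix.mulVec, dotProduct,
              Finset.sum_ite_eq, Finset.sum_ite_eq']
      · rw [Matrix.single_mul_single_of_ne (h := Ne.symm hp), zero_sub]
        by_cases hq : q = aa
        · subst hq
          rw [Matrix.single_mul_single_same, one_mul, map_neg]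
          rcases p with (i | i) | ⟨⟩
          · have hi : i ≠ z := fun h => hp (by rw [hbb, h])
            rw [hbb, sbm_ll (Sum.inl i) (Sum.inl z) (by simp [hi]), hJ]
            simp [Phi, J0, haa, Matrix.mul_apply, Matrix.single, hp,
              Finset.sum_ite_eq, Finset.sum_ite_eq']
          · rw [hbb, sbm_ll (Sum.inr i) (Sum.inl z) (by simp), hJ]
            simp [Phi, J0, haa, Matrix.mul_apply, Matrix.single, hp,
              Finset.sum_ite_eq, Finset.sum_ite_eq']
          · rw [hbb, sbm_rl (Sum.inl z), hJ]
            simp [Phi, J0, haa, hcc, hp, Matrix.mulVec, dotProduct,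
              Finset.sum_ite_eq, Finset.sum_ite_eq']
        · rw [Matrix.single_mul_single_of_ne (h := hq), neg_zero, map_zero]
          simp [hq, hp]
    rw [Finset.sum_congr rfl (fun p _ => key p.1 p.2)]
    rw [Finset.sum_add_distrib]
    have h1 : ∑ p : ((Fin n ⊕ Fin n) ⊕ Unit) × ((Fin n ⊕ Fin n) ⊕ Unit),
        (if p.2 = aa then (1:ℝ) else 0) = 2 * (n : ℝ) + 1 := by
      rw [Fintype.sum_prod_type]
      simp [Finset.sum_ite_eq', Finset.card_univ, Fintype.card_sum]
      ring
    have h2 : ∑ p : ((Fin n ⊕ Fin n) ⊕ Unit) × ((Fin n ⊕ Fin n) ⊕ Unit),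
        (if p.1 = bb ∧ p.2 = cc then (1:ℝ) else 0) = 1 := by
      rw [Fintype.sum_prod_type]
      simp [ite_and, Finset.sum_ite_eq', Finset.sum_ite_irrel, hcc]
    rw [h1, h2]
    ring
  · positivity

end Stmt19
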